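/- Let ω(p) = ∑_{k=1}^d u_k p^{−k} and x(p) = α + γ(p+1/p) with V'(x(p)) = u_0 + ∑_{k=1}^d u_k(p^k + p^{−k}) and u_0 = 0. Then (V'(x(p)) − ω(p))·ω(p) is invariant under p ↦ 1/p, hence equals P(x(p)) for some polynomial P of degree d − 1. -/

import Mathlib

open Polynomial

noncomputable def S15 : ℕ → Polynomial ℂ
  | 0 => 2
  | 1 => Polynomial.X
  | (n+2) => Polynomial.X * S15 (n+1) - S15 n

lemma S15_natDegree_le : ∀ n, (S15 n).natDegree ≤ n := by
  have h : ∀ n, (S15 n).natDegree ≤ n ∧ (S15 (n+1)).natDegree ≤ n + 1 := by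
    intro n
    induction n with
    | zero =>
      constructor
      · simp [S15]
      · simp [S15]
    | succ m ih =>
      refine ⟨ih.2, ?_⟩
      show (S15 (m+2)).natDegree ≤ m + 2
      rw [show S15 (m+2) = Polynomial.X * S15 (m+1) - S15 m from rfl]
      refine (natDegree_sub_le _ _).trans ?_
      have h1 : (Polynomial.X * S15 (m+1)).natDegree ≤ m + 2 := by
        refine (natDegree_mul_le).trans ?_
        rw [natDegree_X]
        omega
      exact max_le h1 (ih.1.trans (by omega))
  exact fun n => (h n).1

lemma S15_eval (p : ℂ) (hp : p ≠ 0) : ∀ n, (S15 n).eval (p + p⁻¹) = p ^ n + p⁻¹ ^ n := by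
  have h : ∀ n, (S15 n).eval (p + p⁻¹) = p ^ n + p⁻¹ ^ n ∧
      (S15 (n+1)).eval (p + p⁻¹) = p ^ (n+1) + p⁻¹ ^ (n+1) := by
    intro n
    induction n with
    | zero =>
      constructor
      · simp [S15]; norm_num
      · simp [S15]
    | succ m ih =>
      refine ⟨ih.2, ?_⟩
      rw [show S15 (m+2) = Polynomial.X * S15 (m+1) - S15 m from rfl]
      simp only [eval_sub, eval_mul, eval_X, ih.1, ih.2]
      field_simp
      linear_combination (p * p⁻¹ ^ m - p⁻¹ * p⁻¹ ^ m) * mul_inv_cancel₀ hp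
  exact fun n => (h n).1

lemma pow_inv_pair (p : ℂ) (hp : p ≠ 0) (k j : ℕ) :
    p ^ k * p⁻¹ ^ j + p ^ j * p⁻¹ ^ k = p ^ (Nat.dist k j) + p⁻¹ ^ (Nat.dist k j) := by
  have key : ∀ (a b : ℕ), b ≤ a →
      p ^ a * p⁻¹ ^ b + p ^ b * p⁻¹ ^ a = p ^ (a - b) + p⁻¹ ^ (a - b) := by
    intro a b hba
    have h1 : p ^ a = p ^ (a - b) * p ^ b := by
      rw [← pow_add]; congr 1; omega
    have h2 : p⁻¹ ^ a = p⁻¹ ^ (a - b) * p⁻¹ ^ b := by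
      rw [← pow_add]; congr 1; omega
    have hpb : p ^ b * p⁻¹ ^ b = 1 := by
      rw [← mul_pow, mul_inv_cancel₀ hp, one_pow]
    rw [h1, h2]
    calc p ^ (a-b) * p ^ b * p⁻¹ ^ b + p ^ b * (p⁻¹ ^ (a-b) * p⁻¹ ^ b)
        = p ^ (a-b) * (p ^ b * p⁻¹ ^ b) + p⁻¹ ^ (a-b) * (p ^ b * p⁻¹ ^ b) := by ring
      _ = p ^ (a-b) + p⁻¹ ^ (a-b) := by rw [hpb]; ring
  rcases le_total j k with h | h
  · rw [Nat.dist_eq_sub_of_le_right h]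
    exact key k j h
  · rw [Nat.dist_eq_sub_of_le h]
    rw [add_comm]
    exact key j k h

/-- (V'(x(p)) − ω(p))·ω(p) is symmetric under p ↦ 1/p and equals
P(x(p)) for a polynomial P of degree ≤ d − 1. -/
theorem stmt15 (α γ : ℂ) (hγ : γ ≠ 0) (V' : Polynomial ℂ) (d : ℕ) (hd : V'.natDegree = d)
    (u : ℕ → ℂ) (h0 : u 0 = 0)
    (hu : ∀ p : ℂ, p ≠ 0 →
      V'.eval (α + γ * (p + p⁻¹)) = u 0 + ∑ k ∈ Finset.Icc 1 d, u k * (p ^ k + p⁻¹ ^ k))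
    (ω : ℂ → ℂ) (hω : ∀ p, ω p = ∑ k ∈ Finset.Icc 1 d, u k * p⁻¹ ^ k) :
    (∀ p : ℂ, p ≠ 0 →
      (V'.eval (α + γ * (p⁻¹ + p⁻¹⁻¹)) - ω p⁻¹) * ω p⁻¹
        = (V'.eval (α + γ * (p + p⁻¹)) - ω p) * ω p) ∧
    ∃ P : Polynomial ℂ, P.natDegree ≤ d - 1 ∧
      ∀ p : ℂ, p ≠ 0 →
        (V'.eval (α + γ * (p + p⁻¹)) - ω p) * ω p = P.eval (α + γ * (p + p⁻¹)) := by
  set s := Finset.Icc 1 d with hs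
  -- A p : the "positive part"
  have hV : ∀ p : ℂ, p ≠ 0 →
      V'.eval (α + γ * (p + p⁻¹)) = (∑ k ∈ s, u k * p ^ k) + ω p := by
    intro p hp
    rw [hu p hp, h0, zero_add, hω, ← Finset.sum_add_distrib]
    exact Finset.sum_congr rfl fun k _ => by ring
  have hωinv : ∀ p : ℂ, p ≠ 0 → ω p⁻¹ = ∑ k ∈ s, u k * p ^ k := by
    intro p hp
    rw [hω]
    simp
  constructor
  · intro p hp
    rw [inv_inv, add_comm p⁻¹ p, hωinv p hp, hV p hp]
    ring
  · -- the polynomial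
    set L : Polynomial ℂ := Polynomial.C γ⁻¹ * (Polynomial.X - Polynomial.C α) with hL
    have hLdeg : L.natDegree ≤ 1 := by
      refine natDegree_mul_le.trans ?_
      simp only [natDegree_C, zero_add]
      exact (natDegree_sub_le _ _).trans (by simp)
    have hLeval : ∀ p : ℂ, p ≠ 0 → L.eval (α + γ * (p + p⁻¹)) = p + p⁻¹ := by
      intro p hp
      simp only [hL, eval_mul, eval_C, eval_sub, eval_X]
      field_simp
      ring
    refine ⟨∑ x ∈ s ×ˢ s, Polynomial.C (u x.1 * u x.2 / 2) *
        (S15 (Nat.dist x.1 x.2)).comp L, ?_, ?_⟩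
    · refine natDegree_sum_le_of_forall_le _ _ ?_
      intro x hx
      refine (natDegree_C_mul_le _ _).trans ?_
      refine (natDegree_comp_le).trans ?_
      have h1 : (S15 (Nat.dist x.1 x.2)).natDegree ≤ Nat.dist x.1 x.2 := S15_natDegree_le _
      have hx' := Finset.mem_product.mp hx
      have hk := Finset.mem_Icc.mp hx'.1
      have hj := Finset.mem_Icc.mp hx'.2
      have hdist : Nat.dist x.1 x.2 ≤ d - 1 := by
        simp only [Nat.dist]
        omega
      calc (S15 (Nat.dist x.1 x.2)).natDegree * L.natDegree
          ≤ Nat.dist x.1 x.2 * 1 := Nat.mul_le_mul h1 hLdeg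
        _ ≤ d - 1 := by omega
    · intro p hp
      rw [hV p hp]
      have hPeval : (∑ x ∈ s ×ˢ s, Polynomial.C (u x.1 * u x.2 / 2) *
          (S15 (Nat.dist x.1 x.2)).comp L).eval (α + γ * (p + p⁻¹))
          = ∑ k ∈ s, ∑ j ∈ s, (u k * u j / 2) * (p ^ k * p⁻¹ ^ j + p ^ j * p⁻¹ ^ k) := by
        rw [eval_finset_sum, Finset.sum_product]
        refine Finset.sum_congr rfl fun k _ => Finset.sum_congr rfl fun j _ => ?_
        rw [eval_mul, eval_C, eval_comp, hLeval p hp, S15_eval p hp, ← pow_inv_pair p hp]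
      rw [hPeval]
      have h1 : ∑ k ∈ s, ∑ j ∈ s, (u k * u j / 2) * (p ^ k * p⁻¹ ^ j)
          = ((∑ k ∈ s, u k * p ^ k) * ω p) / 2 := by
        rw [hω, Finset.sum_mul_sum, Finset.sum_div]
        refine Finset.sum_congr rfl fun k _ => ?_
        rw [Finset.sum_div]
        exact Finset.sum_congr rfl fun j _ => by ring
      have h2 : ∑ k ∈ s, ∑ j ∈ s, (u k * u j / 2) * (p ^ j * p⁻¹ ^ k)
          = ((∑ k ∈ s, u k * p ^ k) * ω p) / 2 := by
        rw [Finset.sum_comm, hω, Finset.sum_mul_sum, Finset.sum_div]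
        refine Finset.sum_congr rfl fun k _ => ?_
        rw [Finset.sum_div]
        exact Finset.sum_congr rfl fun j _ => by ring
      have hsplit : ∑ k ∈ s, ∑ j ∈ s, (u k * u j / 2) * (p ^ k * p⁻¹ ^ j + p ^ j * p⁻¹ ^ k)
          = (∑ k ∈ s, ∑ j ∈ s, (u k * u j / 2) * (p ^ k * p⁻¹ ^ j))
            + ∑ k ∈ s, ∑ j ∈ s, (u k * u j / 2) * (p ^ j * p⁻¹ ^ k) := by
        rw [← Finset.sum_add_distrib]
        refine Finset.sum_congr rfl fun k _ => ?_
        rw [← Finset.sum_add_distrib]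
        exact Finset.sum_congr rfl fun j _ => by ring
      rw [hsplit, h1, h2]
      ring
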